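/- (Rate-distortion optimality) Suppose Φ satisfies the modified RIP with constant ε ∈ (0,1) on all vectors that are differences of k-sparse vectors with common support. Let D₁ = inf over codebooks Ĉ of k-sparse reconstructions with |Ĉ| ≤ 2^{nR} of (1/n)E[‖X − X̂‖_p], and let D₂ be the corresponding infimum achieved by quantizing Y = ΦX with codebook ΦĈ under the measured distortion (1/(nm))∑_i E[|Y_i − ⟨Φ_i, X̂⟩|/‖Φ_i‖_q], then mapping back. Then D₂ ≤ ((1+ε)/(1−ε))·D₁. -/

import Mathlib

open MeasureTheory

/-- The `p`-norm of a vector in `ℝⁿ`. -/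
noncomputable def pnorm (p : ℝ) {n : ℕ} (x : Fin n → ℝ) : ℝ :=
  (∑ j, |x j| ^ p) ^ (1 / p)

/-- A quantizer (reconstruction map) is feasible if its codebook (range) has at
most `2^{nR}` codewords and it preserves the support pattern of the source:
zero coordinates of the input stay zero (so `X̂(Tᶜ) = X(Tᶜ) = 0`). -/
def Feasible (n : ℕ) (R : ℝ) (f : (Fin n → ℝ) → (Fin n → ℝ)) : Prop :=
  (Set.range f).Finite ∧ ((Set.range f).ncard : ℝ) ≤ 2 ^ ((n : ℝ) * R) ∧
    ∀ x : Fin n → ℝ, ∀ j, x j = 0 → f x j = 0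

/-- Normalized expected `p`-norm source distortion of a quantizer `f`. -/
noncomputable def srcDist {Ω : Type*} [MeasurableSpace Ω] (μ : Measure Ω)
    (n : ℕ) (p : ℝ) (X : Ω → Fin n → ℝ) (f : (Fin n → ℝ) → (Fin n → ℝ)) : ℝ :=
  (1 / n) * ∫ ω, pnorm p (X ω - f (X ω)) ∂μ

/-- Normalized expected measured distortion of a quantizer `f` on `Y = ΦX`,
with codebook `ΦĈ`. -/
noncomputable def measDist {Ω : Type*} [MeasurableSpace Ω] (μ : Measure Ω)
    (m n : ℕ) (q : ℝ) (Φ : Matrix (Fin m) (Fin n) ℝ)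
    (X : Ω → Fin n → ℝ) (f : (Fin n → ℝ) → (Fin n → ℝ)) : ℝ :=
  (1 / ((n : ℝ) * m)) *
    ∑ i, ∫ ω, |(∑ j, Φ i j * X ω j) - ∑ j, Φ i j * f (X ω) j| / pnorm q (Φ i) ∂μ

lemma pnorm_nonneg (p : ℝ) {n : ℕ} (x : Fin n → ℝ) : 0 ≤ pnorm p x :=
  Real.rpow_nonneg (Finset.sum_nonneg fun j _ => Real.rpow_nonneg (abs_nonneg _) _) _

lemma srcDist_nonneg {Ω : Type*} [MeasurableSpace Ω] (μ : Measure Ω)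
    (n : ℕ) (p : ℝ) (X : Ω → Fin n → ℝ) (f : (Fin n → ℝ) → (Fin n → ℝ)) :
    0 ≤ srcDist μ n p X f := by
  unfold srcDist
  exact mul_nonneg (by positivity) (integral_nonneg fun ω => pnorm_nonneg _ _)

/-- rate-distortion optimality of compressive sensing followed by
quantization: `D₂ ≤ ((1+ε)/(1−ε)) D₁`, where `D₁` is the optimal source
distortion over feasible codebooks and `D₂` is the source distortion achieved
by quantizers minimizing the measured distortion. -/
theorem stmt18 {Ω : Type*} [MeasurableSpace Ω] (μ : Measure Ω) [IsProbabilityMeasure μ]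
    (m n k : ℕ) (hm : 0 < m) (hn : 0 < n) (R : ℝ)
    (Φ : Matrix (Fin m) (Fin n) ℝ) (hrows : ∀ i, Φ i ≠ 0)
    (p q ε : ℝ) (hp : 1 ≤ p) (hpq : 1 / p + 1 / q = 1) (hε : ε ∈ Set.Ioo (0 : ℝ) 1)
    (hRIP : ∀ v : Fin n → ℝ, (Finset.univ.filter fun j => v j ≠ 0).card ≤ k →
      (1 - ε) * pnorm p v ≤ (1 / m) * ∑ i, |∑ j, Φ i j * v j| / pnorm q (Φ i) ∧
      (1 / m) * ∑ i, |∑ j, Φ i j * v j| / pnorm q (Φ i) ≤ (1 + ε) * pnorm p v)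
    (X : Ω → Fin n → ℝ)
    (hsparse : ∀ ω, (Finset.univ.filter fun j => X ω j ≠ 0).card ≤ k)
    (hIntd : ∀ f, Feasible n R f →
      Integrable (fun ω => pnorm p (X ω - f (X ω))) μ)
    (hIntm : ∀ f, Feasible n R f → ∀ i : Fin m, Integrable
      (fun ω => |(∑ j, Φ i j * X ω j) - ∑ j, Φ i j * f (X ω) j| / pnorm q (Φ i)) μ) :
    sInf {d : ℝ | ∃ f, Feasible n R f ∧
        (∀ g, Feasible n R g → measDist μ m n q Φ X f ≤ measDist μ m n q Φ X g) ∧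
        d = srcDist μ n p X f} ≤
      (1 + ε) / (1 - ε) * sInf {d : ℝ | ∃ f, Feasible n R f ∧ d = srcDist μ n p X f} := by
  obtain ⟨hε0, hε1⟩ := hε
  have h1e : (0:ℝ) < 1 - ε := by linarith
  have h2e : (0:ℝ) < 1 + ε := by linarith
  have hfac : (0:ℝ) < (1 + ε) / (1 - ε) := div_pos h2e h1e
  have hn' : (0:ℝ) < (n:ℝ) := by exact_mod_cast hn
  have hm' : (0:ℝ) < (m:ℝ) := by exact_mod_cast hm
  set S1 := {d : ℝ | ∃ f, Feasible n R f ∧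
      (∀ g, Feasible n R g → measDist μ m n q Φ X f ≤ measDist μ m n q Φ X g) ∧
      d = srcDist μ n p X f} with hS1
  set S2 := {d : ℝ | ∃ f, Feasible n R f ∧ d = srcDist μ n p X f} with hS2
  -- core bounds on any feasible quantizer
  have bound : ∀ f, Feasible n R f →
      (1 - ε) * srcDist μ n p X f ≤ measDist μ m n q Φ X f ∧
      measDist μ m n q Φ X f ≤ (1 + ε) * srcDist μ n p X f := by
    intro f hf
    have hpt : ∀ ω,
        (1 - ε) * pnorm p (X ω - f (X ω)) ≤
          (1 / m) * ∑ i, |(∑ j, Φ i j * X ω j) - ∑ j, Φ i j * f (X ω) j| / pnorm q (Φ i) ∧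
        (1 / m) * ∑ i, |(∑ j, Φ i j * X ω j) - ∑ j, Φ i j * f (X ω) j| / pnorm q (Φ i) ≤
          (1 + ε) * pnorm p (X ω - f (X ω)) := by
      intro ω
      have hsp : (Finset.univ.filter fun j => (X ω - f (X ω)) j ≠ 0).card ≤ k := by
        refine le_trans (Finset.card_le_card ?_) (hsparse ω)
        intro j hj
        simp only [Finset.mem_filter, Finset.mem_univ, true_and, Pi.sub_apply] at hj ⊢
        intro h0
        exact hj (by rw [h0, hf.2.2 _ _ h0, sub_zero])
      have := hRIP _ hsp
      have heq : ∀ i : Fin m, ∑ j, Φ i j * (X ω - f (X ω)) j =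
          (∑ j, Φ i j * X ω j) - ∑ j, Φ i j * f (X ω) j := by
        intro i
        simp [Pi.sub_apply, mul_sub, Finset.sum_sub_distrib]
      simpa only [heq] using this
    have hI1 : Integrable (fun ω => (1 - ε) * pnorm p (X ω - f (X ω))) μ :=
      (hIntd f hf).const_mul _
    have hI1' : Integrable (fun ω => (1 + ε) * pnorm p (X ω - f (X ω))) μ :=
      (hIntd f hf).const_mul _
    have hI2 : Integrable (fun ω => (1 / (m:ℝ)) *
        ∑ i, |(∑ j, Φ i j * X ω j) - ∑ j, Φ i j * f (X ω) j| / pnorm q (Φ i)) μ :=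
      (integrable_finset_sum _ fun i _ => hIntm f hf i).const_mul _
    have hint1 : (1 - ε) * ∫ ω, pnorm p (X ω - f (X ω)) ∂μ ≤
        (1 / (m:ℝ)) * ∑ i,
          ∫ ω, |(∑ j, Φ i j * X ω j) - ∑ j, Φ i j * f (X ω) j| / pnorm q (Φ i) ∂μ := by
      have := integral_mono hI1 hI2 (fun ω => (hpt ω).1)
      rwa [integral_const_mul, integral_const_mul,
        integral_finset_sum _ (fun i _ => hIntm f hf i)] at this
    have hint2 : (1 / (m:ℝ)) * ∑ i,
          ∫ ω, |(∑ j, Φ i j * X ω j) - ∑ j, Φ i j * f (X ω) j| / pnorm q (Φ i) ∂μ ≤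
        (1 + ε) * ∫ ω, pnorm p (X ω - f (X ω)) ∂μ := by
      have := integral_mono hI2 hI1' (fun ω => (hpt ω).2)
      rwa [integral_const_mul, integral_const_mul,
        integral_finset_sum _ (fun i _ => hIntm f hf i)] at this
    unfold srcDist measDist
    constructor
    · have := mul_le_mul_of_nonneg_left hint1 (le_of_lt (one_div_pos.mpr hn'))
      calc (1 - ε) * ((1 / (n:ℝ)) * ∫ ω, pnorm p (X ω - f (X ω)) ∂μ)
          = (1 / (n:ℝ)) * ((1 - ε) * ∫ ω, pnorm p (X ω - f (X ω)) ∂μ) := by ring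
        _ ≤ (1 / (n:ℝ)) * ((1 / (m:ℝ)) * ∑ i,
              ∫ ω, |(∑ j, Φ i j * X ω j) - ∑ j, Φ i j * f (X ω) j| / pnorm q (Φ i) ∂μ) := this
        _ = (1 / ((n:ℝ) * m)) * ∑ i,
              ∫ ω, |(∑ j, Φ i j * X ω j) - ∑ j, Φ i j * f (X ω) j| / pnorm q (Φ i) ∂μ := by
            field_simp
    · have := mul_le_mul_of_nonneg_left hint2 (le_of_lt (one_div_pos.mpr hn'))
      calc (1 / ((n:ℝ) * m)) * ∑ i,
              ∫ ω, |(∑ j, Φ i j * X ω j) - ∑ j, Φ i j * f (X ω) j| / pnorm q (Φ i) ∂μ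
          = (1 / (n:ℝ)) * ((1 / (m:ℝ)) * ∑ i,
              ∫ ω, |(∑ j, Φ i j * X ω j) - ∑ j, Φ i j * f (X ω) j| / pnorm q (Φ i) ∂μ) := by
            field_simp
        _ ≤ (1 / (n:ℝ)) * ((1 + ε) * ∫ ω, pnorm p (X ω - f (X ω)) ∂μ) := this
        _ = (1 + ε) * ((1 / (n:ℝ)) * ∫ ω, pnorm p (X ω - f (X ω)) ∂μ) := by ring
  have hS2inf : 0 ≤ sInf S2 := by
    rcases Set.eq_empty_or_nonempty S2 with h | h
    · rw [h, Real.sInf_empty]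
    · exact le_csInf h (by rintro d ⟨g, hg, rfl⟩; exact srcDist_nonneg μ n p X g)
  rcases Set.eq_empty_or_nonempty S1 with h | h
  · rw [h, Real.sInf_empty]
    exact mul_nonneg hfac.le hS2inf
  · obtain ⟨d, f, hf, hmin, rfl⟩ := h
    have hbdd : BddBelow S1 := ⟨0, by rintro d ⟨g, hg, _, rfl⟩; exact srcDist_nonneg μ n p X g⟩
    have h1 : sInf S1 ≤ srcDist μ n p X f := csInf_le hbdd ⟨f, hf, hmin, rfl⟩
    have hne2 : S2.Nonempty := ⟨srcDist μ n p X f, f, hf, rfl⟩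
    have key : srcDist μ n p X f * (1 - ε) / (1 + ε) ≤ sInf S2 := by
      refine le_csInf hne2 ?_
      rintro d ⟨g, hg, rfl⟩
      have c1 := (bound f hf).1
      have c2 := hmin g hg
      have c3 := (bound g hg).2
      rw [div_le_iff₀ h2e]
      nlinarith
    have := mul_le_mul_of_nonneg_left key hfac.le
    calc sInf S1 ≤ srcDist μ n p X f := h1
      _ = (1 + ε) / (1 - ε) * (srcDist μ n p X f * (1 - ε) / (1 + ε)) := by
          field_simp
      _ ≤ (1 + ε) / (1 - ε) * sInf S2 := this
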